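/- Algebraic reformulation of the sufficient condition: For every β ∈ [0,1], the inequality −β ⟪g, d⟫ + (1 − β) ξ ‖g‖² ≥ ε (β ‖g‖ ‖d‖ + (1 − β) ξ ‖g‖²) holds if and only if β (ρ + π) ≤ ρ, where ρ = ξ (1 − ε) and π = ⟪g, d⟫ / ‖g‖² + ε ‖d‖ / ‖g‖. Consequently, when the violation hypothesis −⟪g, d⟫ < ε ‖g‖ ‖d‖ holds (so that ρ > 0 and π > 0), the inequality holds if and only if β ≤ β̂ = ρ / (ρ + π), and β̂ < 1. -/

import Mathlib

open scoped RealInnerProductSpace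

noncomputable def dvec {n : ℕ} (g d : EuclideanSpace ℝ (Fin n)) (ξ β : ℝ) :
    EuclideanSpace ℝ (Fin n) :=
  β • d - ((1 - β) * ξ) • g

noncomputable def rho (ξ ε : ℝ) : ℝ := ξ * (1 - ε)

noncomputable def piV {n : ℕ} (g d : EuclideanSpace ℝ (Fin n)) (ε : ℝ) : ℝ :=
  ⟪g, d⟫ / ‖g‖ ^ 2 + ε * ‖d‖ / ‖g‖

noncomputable def betahat {n : ℕ} (g d : EuclideanSpace ℝ (Fin n)) (ξ ε : ℝ) : ℝ :=
  rho ξ ε / (rho ξ ε + piV g d ε)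

/-- Algebraic reformulation of the sufficient condition: for β ∈ [0,1] the sufficient
inequality holds iff β (ρ + π) ≤ ρ; under the violation hypothesis (so ρ, π > 0) it
holds iff β ≤ β̂ = ρ/(ρ+π), and β̂ < 1. -/
theorem sufficient_condition_reformulation {n : ℕ} (g d : EuclideanSpace ℝ (Fin n))
    (hind : LinearIndependent ℝ ![g, d]) (ε ξ : ℝ)
    (hε : ε ∈ Set.Ioo (0 : ℝ) 1) (hξ : 0 < ξ) :
    (∀ β ∈ Set.Icc (0 : ℝ) 1,
      (-β * ⟪g, d⟫ + (1 - β) * ξ * ‖g‖ ^ 2 ≥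
          ε * (β * ‖g‖ * ‖d‖ + (1 - β) * ξ * ‖g‖ ^ 2) ↔
        β * (rho ξ ε + piV g d ε) ≤ rho ξ ε)) ∧
    (-⟪g, d⟫ < ε * ‖g‖ * ‖d‖ →
      (∀ β ∈ Set.Icc (0 : ℝ) 1,
        (-β * ⟪g, d⟫ + (1 - β) * ξ * ‖g‖ ^ 2 ≥
            ε * (β * ‖g‖ * ‖d‖ + (1 - β) * ξ * ‖g‖ ^ 2) ↔
          β ≤ betahat g d ξ ε)) ∧
      betahat g d ξ ε < 1) := by
  obtain ⟨hε0, hε1⟩ := hε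
  have hg : g ≠ 0 := by
    have := hind.ne_zero 0
    simpa using this
  have hgn : 0 < ‖g‖ := norm_pos_iff.mpr hg
  have hG : 0 < ‖g‖ ^ 2 := by positivity
  have hpiG : piV g d ε * ‖g‖ ^ 2 = ⟪g, d⟫ + ε * ‖g‖ * ‖d‖ := by
    rw [piV]; field_simp
  have key : ∀ β : ℝ,
      (-β * ⟪g, d⟫ + (1 - β) * ξ * ‖g‖ ^ 2 ≥
          ε * (β * ‖g‖ * ‖d‖ + (1 - β) * ξ * ‖g‖ ^ 2) ↔
        β * (rho ξ ε + piV g d ε) ≤ rho ξ ε) := by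
    intro β
    rw [ge_iff_le]
    conv_rhs => rw [← mul_le_mul_iff_of_pos_right hG]
    have h1 : β * (rho ξ ε + piV g d ε) * ‖g‖ ^ 2 =
        β * (ξ * (1 - ε)) * ‖g‖ ^ 2 + β * (piV g d ε * ‖g‖ ^ 2) := by
      rw [rho]; ring
    rw [h1, hpiG, rho]
    constructor <;> intro h <;> nlinarith [h]
  refine ⟨fun β _ => key β, fun hviol => ?_⟩
  have hρ : 0 < rho ξ ε := by rw [rho]; nlinarith
  have hπ : 0 < piV g d ε := by
    have : piV g d ε = (⟪g, d⟫ + ε * ‖g‖ * ‖d‖) / ‖g‖ ^ 2 := by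
      rw [piV]; field_simp
    rw [this]
    apply div_pos _ hG
    linarith
  have hsum : 0 < rho ξ ε + piV g d ε := by linarith
  refine ⟨fun β hβ => ?_, ?_⟩
  · rw [key β, betahat, le_div_iff₀ hsum]
  · rw [betahat, div_lt_one hsum]; linarith
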